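/- arXiv:hep-th/0412162 — 4 statements merged into one kernel-verified Lean document; each statement's English description precedes it below -/
import Mathlib

section
/- The commutator of the derivations e and f equals the derivation L = k̲ + k̲⁻¹, i.e. e ∘ f − f ∘ e = k̲ + k̲⁻¹ as ℂ-linear derivations of A. (Equivalently, it suffices to verify the equality on the generators x, y, z of A.) -/
open LaurentPolynomial

noncomputable section

/-- The ring `A = ℂ[x, y, z, z⁻¹]`: Laurent polynomials in `z` over `ℂ[x, y]`. -/
abbrev A : Type := LaurentPolynomial (MvPolynomial (Fin 2) ℂ)

/-- The variable `x`. -/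
def Xv : A := C (MvPolynomial.X 0)

/-- The variable `y`. -/
def Yv : A := C (MvPolynomial.X 1)

/-- The variable `z`. -/
def Zv : A := T 1

/-- The variable `z⁻¹`. -/
def Zi : A := T (-1)

lemma hZ : Zv * Zi = 1 := by
  have h : (1 : ℤ) + -1 = 0 := by norm_num
  rw [Zv, Zi, ← T_add, h, T_zero]

lemma T_mem_adjoin (n : ℤ) : T n ∈ Algebra.adjoin ℂ ({Xv, Yv, Zv, Zi} : Set A) := by
  induction n using Int.induction_on with
  | zero => simpa using Subalgebra.one_mem _
  | succ n ih =>
      have : (T ((n : ℤ) + 1) : A) = T n * T 1 := by rw [← T_add]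
      rw [this]
      exact mul_mem ih (Algebra.subset_adjoin (by simp [Zv]))
  | pred n ih =>
      have : (T (-(n : ℤ) - 1) : A) = T (-n) * T (-1) := by rw [← T_add]; ring_nf
      rw [this]
      exact mul_mem ih (Algebra.subset_adjoin (by simp [Zi]))

lemma C_mem_adjoin (a : MvPolynomial (Fin 2) ℂ) :
    C a ∈ Algebra.adjoin ℂ ({Xv, Yv, Zv, Zi} : Set A) := by
  induction a using MvPolynomial.induction_on with
  | C c =>
      have : (C (MvPolynomial.C c) : A) = algebraMap ℂ A c := rfl
      rw [this]; exact Subalgebra.algebraMap_mem _ c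
  | add p q hp hq => rw [map_add]; exact add_mem hp hq
  | mul_X p i hp =>
      rw [map_mul]
      refine mul_mem hp (Algebra.subset_adjoin ?_)
      fin_cases i
      · exact Or.inl rfl
      · exact Or.inr (Or.inl rfl)

lemma adjoin_eq_top : Algebra.adjoin ℂ ({Xv, Yv, Zv, Zi} : Set A) = ⊤ := by
  rw [eq_top_iff]
  intro a ha
  clear ha
  induction a using LaurentPolynomial.induction_on' with
  | add p q hp hq => exact add_mem hp hq
  | C_mul_T n r => exact mul_mem (C_mem_adjoin r) (T_mem_adjoin n)

lemma deriv_Zi (d : Derivation ℂ A A) : d Zi = -(Zi * Zi * d Zv) := by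
  have h0 : d (Zv * Zi) = 0 := by rw [hZ]; exact d.map_one_eq_zero
  rw [d.leibniz, smul_eq_mul, smul_eq_mul] at h0
  calc d Zi = (Zv * Zi) * d Zi := by rw [hZ, one_mul]
    _ = Zi * (Zv * d Zi) := by ring
    _ = Zi * (-(Zi * d Zv)) := by rw [eq_neg_of_add_eq_zero_left h0]
    _ = -(Zi * Zi * d Zv) := by ring

/-- The commutator `e ∘ f − f ∘ e` of the derivations `e` and `f` equals the
derivation `L = k̲ + k̲⁻¹`. -/
theorem stmt1
    (e f kk kk' : Derivation ℂ A A)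
    (hex : e Xv = 0) (hey : e Yv = Zv - Zi) (hez : e Zv = -(Xv * Zv))
    (hfx : f Xv = -(Zv - Zi)) (hfy : f Yv = 0) (hfz : f Zv = Yv * Zv)
    (hkx : kk Xv = Xv * Zv) (hky : kk Yv = -(Yv * Zv)) (hkz : kk Zv = 0)
    (hk'x : kk' Xv = Xv * Zi) (hk'y : kk' Yv = -(Yv * Zi)) (hk'z : kk' Zv = 0) :
    ∀ a : A, e (f a) - f (e a) = (kk + kk') a := by
  have hezi : e Zi = Xv * Zi := by
    rw [deriv_Zi e, hez]
    linear_combination (Xv * Zi) * hZ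
  have hfzi : f Zi = -(Yv * Zi) := by
    rw [deriv_Zi f, hfz]
    linear_combination (-(Yv * Zi)) * hZ
  have hbz : (⁅e, f⁆ : Derivation ℂ A A) Zv = 0 := by
    simp only [Derivation.commutator_apply, hez, hfz, map_neg, Derivation.leibniz,
      smul_eq_mul, hey, hfx]
    ring
  have hEq : Set.EqOn (⇑(⁅e, f⁆ : Derivation ℂ A A)) (⇑(kk + kk' : Derivation ℂ A A))
      ({Xv, Yv, Zv, Zi} : Set A) := by
    intro a ha
    rcases ha with rfl | rfl | rfl | rfl
    · show (⁅e, f⁆ : Derivation ℂ A A) Xv = (kk + kk') Xv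
      rw [Derivation.commutator_apply, Derivation.add_apply, hfx, hex, map_neg, map_sub,
        hez, hezi, map_zero, hkx, hk'x]
      ring
    · show (⁅e, f⁆ : Derivation ℂ A A) Yv = (kk + kk') Yv
      rw [Derivation.commutator_apply, Derivation.add_apply, hfy, hey, map_zero, map_sub,
        hfz, hfzi, hky, hk'y]
      ring
    · show (⁅e, f⁆ : Derivation ℂ A A) Zv = (kk + kk') Zv
      rw [hbz, Derivation.add_apply, hkz, hk'z]; ring
    · show (⁅e, f⁆ : Derivation ℂ A A) Zi = (kk + kk') Zi
      rw [deriv_Zi, deriv_Zi, hbz, Derivation.add_apply, hkz, hk'z]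
      ring
  intro a
  have ha : a ∈ Algebra.adjoin ℂ ({Xv, Yv, Zv, Zi} : Set A) := by
    rw [adjoin_eq_top]; trivial
  have := Derivation.eqOn_adjoin hEq ha
  rwa [Derivation.commutator_apply] at this
end
end

section
/- For every natural number N ≥ 1, the derivation f_N of A satisfies: f_N(x) = (−1)^(N−1)·(z + z⁻¹)^N·(z − z⁻¹) + (−1)^N·N·x·y·(z + z⁻¹)^(N−1)·(z − z⁻¹), f_N(y) = (−1)^(N−1)·N·y²·(z + z⁻¹)^(N−1)·(z − z⁻¹), and f_N(z + z⁻¹) = (−1)^N·y·(z + z⁻¹)^N·(z − z⁻¹). -/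
open LaurentPolynomial

noncomputable section

lemma zmul : Zv * Zi = (1 : A) := by
  rw [Zv, Zi, ← T_add]
  norm_num

lemma dZi (D : Derivation ℂ A A) : D Zi = -(Zi * Zi * D Zv) := by
  have h := D.leibniz Zv Zi
  rw [zmul, D.map_one_eq_zero] at h
  simp only [smul_eq_mul] at h
  linear_combination -Zi * h - D Zi * zmul

/-- Values of the derivation `f_N` on `x`, `y` and `z + z⁻¹`, for `N ≥ 1`. -/
theorem stmt3
    (e f kk kk' : Derivation ℂ A A)
    (hex : e Xv = 0) (hey : e Yv = Zv - Zi) (hez : e Zv = -(Xv * Zv))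
    (hfx : f Xv = -(Zv - Zi)) (hfy : f Yv = 0) (hfz : f Zv = Yv * Zv)
    (hkx : kk Xv = Xv * Zv) (hky : kk Yv = -(Yv * Zv)) (hkz : kk Zv = 0)
    (hk'x : kk' Xv = Xv * Zi) (hk'y : kk' Yv = -(Yv * Zi)) (hk'z : kk' Zv = 0)
    (E F : ℕ → Derivation ℂ A A) (hE0 : E 0 = e) (hF0 : F 0 = f)
    (hEs : ∀ (n : ℕ) (a : A), E (n + 1) a = (kk + kk') (E n a) - E n ((kk + kk') a))
    (hFs : ∀ (n : ℕ) (a : A), F (n + 1) a = (kk + kk') (F n a) - F n ((kk + kk') a))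
    (N : ℕ) (hN : 1 ≤ N) :
    F N Xv = (-1 : A) ^ (N - 1) * (Zv + Zi) ^ N * (Zv - Zi)
        + (-1 : A) ^ N * (N : A) * Xv * Yv * (Zv + Zi) ^ (N - 1) * (Zv - Zi) ∧
      F N Yv = (-1 : A) ^ (N - 1) * (N : A) * Yv ^ 2 * (Zv + Zi) ^ (N - 1) * (Zv - Zi) ∧
      F N (Zv + Zi) = (-1 : A) ^ N * Yv * (Zv + Zi) ^ N * (Zv - Zi) := by
  have hkZi : kk Zi = 0 := by rw [dZi kk, hkz]; ring
  have hk'Zi : kk' Zi = 0 := by rw [dZi kk', hk'z]; ring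
  have hfZi : f Zi = -(Yv * Zi) := by
    rw [dZi f, hfz]; linear_combination (-(Yv * Zi)) * zmul
  have hLx : (kk + kk') Xv = Xv * (Zv + Zi) := by
    rw [Derivation.add_apply, hkx, hk'x]; ring
  have hLy : (kk + kk') Yv = -(Yv * (Zv + Zi)) := by
    rw [Derivation.add_apply, hky, hk'y]; ring
  have hLZv : (kk + kk') Zv = 0 := by rw [Derivation.add_apply, hkz, hk'z, add_zero]
  have hLZi : (kk + kk') Zi = 0 := by rw [Derivation.add_apply, hkZi, hk'Zi, add_zero]
  have hLS : (kk + kk') (Zv + Zi) = 0 := by rw [map_add, hLZv, hLZi, add_zero]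
  have hLD : (kk + kk') (Zv - Zi) = 0 := by rw [map_sub, hLZv, hLZi, sub_zero]
  have hfS : f (Zv + Zi) = Yv * (Zv - Zi) := by rw [map_add, hfz, hfZi]; ring
  obtain ⟨n, rfl⟩ : ∃ n, N = n + 1 := ⟨N - 1, (Nat.succ_pred_eq_of_pos hN).symm⟩
  clear hN
  induction n with
  | zero =>
    refine ⟨?_, ?_, ?_⟩
    · rw [hFs 0 Xv, hF0, hfx, hLx, f.leibniz Xv (Zv + Zi), hfS, hfx,
        map_neg, map_sub, hLZv, hLZi]
      simp only [smul_eq_mul]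
      norm_num
      ring
    · rw [hFs 0 Yv, hF0, hfy, hLy, map_neg, f.leibniz Yv (Zv + Zi), hfS, hfy,
        map_zero]
      simp only [smul_eq_mul]
      norm_num
      ring
    · rw [hFs 0 (Zv + Zi), hF0, hfS, hLS, map_zero,
        (kk + kk').leibniz Yv (Zv - Zi), hLD, hLy]
      simp only [smul_eq_mul]
      norm_num
      ring
  | succ n ih =>
    simp only [Nat.add_sub_cancel] at ih ⊢
    obtain ⟨ihx, ihy, ihs⟩ := ih
    refine ⟨?_, ?_, ?_⟩
    · rw [hFs (n + 1) Xv, hLx, (F (n + 1)).leibniz Xv (Zv + Zi), ihs, ihx]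
      simp only [map_add, map_sub, map_neg, Derivation.leibniz, Derivation.leibniz_pow,
        Derivation.map_natCast, Derivation.map_one_eq_zero, hLx, hLy, hLZv, hLZi,
        smul_eq_mul, mul_zero, zero_mul, add_zero, zero_add, smul_zero, neg_zero,
        sub_zero, zero_sub]
      push_cast
      ring
    · rw [hFs (n + 1) Yv, hLy, map_neg, (F (n + 1)).leibniz Yv (Zv + Zi), ihs, ihy]
      simp only [map_add, map_sub, map_neg, Derivation.leibniz, Derivation.leibniz_pow,
        Derivation.map_natCast, Derivation.map_one_eq_zero, hLx, hLy, hLZv, hLZi,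
        smul_eq_mul, mul_zero, zero_mul, add_zero, zero_add, smul_zero, neg_zero,
        sub_zero, zero_sub]
      push_cast
      ring
    · rw [hFs (n + 1) (Zv + Zi), hLS, map_zero, ihs]
      simp only [map_add, map_sub, map_neg, Derivation.leibniz, Derivation.leibniz_pow,
        Derivation.map_natCast, Derivation.map_one_eq_zero, hLx, hLy, hLZv, hLZi,
        smul_eq_mul, mul_zero, zero_mul, add_zero, zero_add, smul_zero, neg_zero,
        sub_zero, zero_sub]
      push_cast
      ring
end
end

section
/- For every natural number N, the derivation f_N annihilates the element z + z⁻¹ + xy of A, i.e. f_N(z + z⁻¹ + xy) = 0. -/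
open LaurentPolynomial

noncomputable section

/-- Every derivation `f_N` annihilates `z + z⁻¹ + xy`. -/
theorem stmt5
    (e f kk kk' : Derivation ℂ A A)
    (hex : e Xv = 0) (hey : e Yv = Zv - Zi) (hez : e Zv = -(Xv * Zv))
    (hfx : f Xv = -(Zv - Zi)) (hfy : f Yv = 0) (hfz : f Zv = Yv * Zv)
    (hkx : kk Xv = Xv * Zv) (hky : kk Yv = -(Yv * Zv)) (hkz : kk Zv = 0)
    (hk'x : kk' Xv = Xv * Zi) (hk'y : kk' Yv = -(Yv * Zi)) (hk'z : kk' Zv = 0)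
    (E F : ℕ → Derivation ℂ A A) (hE0 : E 0 = e) (hF0 : F 0 = f)
    (hEs : ∀ (n : ℕ) (a : A), E (n + 1) a = (kk + kk') (E n a) - E n ((kk + kk') a))
    (hFs : ∀ (n : ℕ) (a : A), F (n + 1) a = (kk + kk') (F n a) - F n ((kk + kk') a))
    (N : ℕ) :
    F N (Zv + Zi + Xv * Yv) = 0 := by

  have hzz : Zv * Zi = (1 : A) := by
    rw [Zv, Zi, ← T_add]; norm_num
  have hDzi : ∀ (D : Derivation ℂ A A), D Zi = -(Zi * Zi * D Zv) := by
    intro D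
    have h0 : Zv • D Zi + Zi • D Zv = 0 := by
      rw [← Derivation.leibniz, hzz, Derivation.map_one_eq_zero]
    rw [smul_eq_mul, smul_eq_mul] at h0
    linear_combination Zi * h0 - (D Zi) * hzz
  have hfzi : f Zi = -(Yv * Zi) := by
    rw [hDzi f, hfz]; linear_combination (-(Yv * Zi)) * hzz
  have hkzi : kk Zi = 0 := by rw [hDzi kk, hkz]; ring
  have hk'zi : kk' Zi = 0 := by rw [hDzi kk', hk'z]; ring
  have hkC : kk (Zv + Zi + Xv * Yv) = 0 := by
    rw [map_add, map_add, Derivation.leibniz, hkz, hkzi, hkx, hky, smul_eq_mul, smul_eq_mul]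
    ring
  have hk'C : kk' (Zv + Zi + Xv * Yv) = 0 := by
    rw [map_add, map_add, Derivation.leibniz, hk'z, hk'zi, hk'x, hk'y, smul_eq_mul, smul_eq_mul]
    ring
  have hLC : (kk + kk') (Zv + Zi + Xv * Yv) = 0 := by
    rw [Derivation.add_apply, hkC, hk'C, add_zero]
  induction N with
  | zero =>
    rw [hF0, map_add, map_add, Derivation.leibniz, hfz, hfzi, hfx, hfy, smul_eq_mul, smul_eq_mul]
    ring
  | succ n ih =>
    rw [hFs n, ih, hLC, map_zero, map_zero, sub_zero]
end
end

section
/- For every natural number N ≥ 1, modulo the ideal of A generated by z + z⁻¹ + xy one has the congruence f_N(x) ≡ (−1)^N·(N+1)·x·y·(z + z⁻¹)^(N−1)·(z − z⁻¹), i.e. f_N(x) − (−1)^N·(N+1)·x·y·(z + z⁻¹)^(N−1)·(z − z⁻¹) lies in the ideal generated by z + z⁻¹ + xy. -/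
open LaurentPolynomial

noncomputable section

set_option maxHeartbeats 1000000

/-- Modulo the ideal generated by `z + z⁻¹ + xy`, one has
`f_N(x) ≡ (−1)^N (N+1) x y (z + z⁻¹)^(N−1) (z − z⁻¹)` for `N ≥ 1`. -/
theorem stmt9
    (e f kk kk' : Derivation ℂ A A)
    (hex : e Xv = 0) (hey : e Yv = Zv - Zi) (hez : e Zv = -(Xv * Zv))
    (hfx : f Xv = -(Zv - Zi)) (hfy : f Yv = 0) (hfz : f Zv = Yv * Zv)
    (hkx : kk Xv = Xv * Zv) (hky : kk Yv = -(Yv * Zv)) (hkz : kk Zv = 0)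
    (hk'x : kk' Xv = Xv * Zi) (hk'y : kk' Yv = -(Yv * Zi)) (hk'z : kk' Zv = 0)
    (E F : ℕ → Derivation ℂ A A) (hE0 : E 0 = e) (hF0 : F 0 = f)
    (hEs : ∀ (n : ℕ) (a : A), E (n + 1) a = (kk + kk') (E n a) - E n ((kk + kk') a))
    (hFs : ∀ (n : ℕ) (a : A), F (n + 1) a = (kk + kk') (F n a) - F n ((kk + kk') a))
    (N : ℕ) (hN : 1 ≤ N) :
    F N Xv - (-1 : A) ^ N * ((N : A) + 1) * Xv * Yv * (Zv + Zi) ^ (N - 1) * (Zv - Zi)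
      ∈ Ideal.span {Zv + Zi + Xv * Yv} := by
  have hzz : Zv * Zi = 1 := by rw [Zv, Zi, ← T_add]; norm_num
  have hleib : ∀ (D : Derivation ℂ A A) (a b : A), D (a*b) = a * D b + b * D a := by
    intro D a b; rw [D.leibniz]; simp [smul_eq_mul]
  have hDzi : ∀ D : Derivation ℂ A A, D Zi = -(Zi * Zi * D Zv) := by
    intro D
    have h0 : (0:A) = Zv * D Zi + Zi * D Zv := by
      have h := hleib D Zv Zi
      rw [hzz, Derivation.map_one_eq_zero] at h
      exact h
    linear_combination (-Zi) * h0 - D Zi * hzz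
  have hfzi : f Zi = -(Yv * Zi) := by
    rw [hDzi f, hfz]; linear_combination (-(Zi*Yv)) * hzz
  have hkzi : kk Zi = 0 := by rw [hDzi kk, hkz]; ring
  have hk'zi : kk' Zi = 0 := by rw [hDzi kk', hk'z]; ring
  have hLapp : ∀ a : A, (kk + kk') a = kk a + kk' a := fun a => rfl
  have hLx : (kk+kk') Xv = Xv * (Zv + Zi) := by rw [hLapp, hkx, hk'x]; ring
  have hLy : (kk+kk') Yv = -(Yv * (Zv + Zi)) := by rw [hLapp, hky, hk'y]; ring
  have hLw : (kk+kk') (Zv + Zi) = 0 := by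
    rw [map_add, hLapp, hLapp, hkz, hk'z, hkzi, hk'zi]; ring
  have hLu : (kk+kk') (Zv - Zi) = 0 := by
    rw [map_sub, hLapp, hLapp, hkz, hk'z, hkzi, hk'zi]; ring
  have hfw : f (Zv + Zi) = Yv * (Zv - Zi) := by rw [map_add, hfz, hfzi]; ring
  have hLpow : ∀ m : ℕ, (kk+kk') ((Zv+Zi)^m) = 0 := by
    intro m
    induction m with
    | zero => simpa using (kk+kk').map_one_eq_zero
    | succ k ih => rw [pow_succ, hleib, ih, hLw]; ring
  have hLmon : ∀ m : ℕ, (kk+kk') ((Zv+Zi)^m * (Zv-Zi)) = 0 := by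
    intro m; rw [hleib, hLpow, hLu]; ring
  have hLXY : (kk+kk') (Xv*Yv) = 0 := by rw [hleib, hLx, hLy]; ring
  have hLc : ∀ r : ℂ, (kk+kk') (algebraMap ℂ A r) = 0 := (kk+kk').map_algebraMap
  -- Lemma A : exact formula for F n (z + z⁻¹)
  have hFw : ∀ n : ℕ, F n (Zv + Zi) = (-1:A)^n * (Yv * ((Zv+Zi)^n * (Zv - Zi))) := by
    intro n
    induction n with
    | zero => rw [hF0]; simpa using hfw
    | succ m ih =>
      rw [hFs, hLw, map_zero, sub_zero, ih]
      have hc : ((-1:A)^m) = algebraMap ℂ A ((-1)^m) := by simp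
      rw [hleib, hc, hLc, hleib, hLmon, hLy]
      push_cast
      ring
  -- key induction
  have key : ∀ m : ℕ,
      F (m+1) Xv - (-1:A)^(m+1) * (((m:A)+1)+1) * Xv * Yv * (Zv+Zi)^m * (Zv-Zi)
        ∈ Ideal.span {Zv + Zi + Xv * Yv} := by
    intro m
    induction m with
    | zero =>
      have h1 : F 1 Xv = (Zv-Zi)*(Zv+Zi) - Xv*Yv*(Zv-Zi) := by
        rw [hFs, hF0, hLx, hleib, hfx, hfw, map_neg, hLu]
        ring
      rw [h1, show (Zv-Zi)*(Zv+Zi) - Xv*Yv*(Zv-Zi) -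
          (-1:A)^(0+1) * ((((0:ℕ):A)+1)+1) * Xv * Yv * (Zv+Zi)^0 * (Zv-Zi)
          = (Zv-Zi) * (Zv+Zi+Xv*Yv) by push_cast; ring]
      exact Ideal.mul_mem_left _ _ (Ideal.subset_span (Set.mem_singleton _))
    | succ m ih =>
      set δ : A := F (m+1) Xv -
        (-1:A)^(m+1) * (((m:A)+1)+1) * Xv * Yv * (Zv+Zi)^m * (Zv-Zi) with hδ
      have hLr : (kk+kk')
          ((-1:A)^(m+1) * (((m:A)+1)+1) * Xv * Yv * (Zv+Zi)^m * (Zv-Zi)) = 0 := by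
        have hc : ((-1:A)^(m+1) * (((m:A)+1)+1))
            = algebraMap ℂ A ((-1)^(m+1) * (((m:ℂ)+1)+1)) := by
          simp only [map_mul, map_pow, map_neg, map_one, map_add, map_natCast]
        rw [show (-1:A)^(m+1) * (((m:A)+1)+1) * Xv * Yv * (Zv+Zi)^m * (Zv-Zi)
            = ((-1:A)^(m+1) * (((m:A)+1)+1)) * ((Xv*Yv) * ((Zv+Zi)^m * (Zv-Zi)))
            by ring, hc, hleib, hleib, hLXY, hLmon, hLc]
        ring
      have hstep : F (m+1+1) Xv -
          (-1:A)^(m+1+1) * ((((m+1:ℕ):A))+1+1) * Xv * Yv * (Zv+Zi)^(m+1) * (Zv-Zi)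
          = (kk+kk') δ - (Zv+Zi) * δ := by
        have e2 : F (m+1) Xv = δ +
            (-1:A)^(m+1) * (((m:A)+1)+1) * Xv * Yv * (Zv+Zi)^m * (Zv-Zi) := by
          rw [hδ]; ring
        rw [hFs, hLx, hleib, hFw (m+1), e2, map_add, hLr]
        push_cast
        ring
      have hLmem : (kk+kk') δ ∈ Ideal.span {Zv + Zi + Xv * Yv} := by
        obtain ⟨c, hc⟩ := Ideal.mem_span_singleton'.mp ih
        have : (kk+kk') δ = (kk+kk') c * (Zv + Zi + Xv * Yv) := by
          rw [← hc, hleib, show (kk+kk') (Zv + Zi + Xv * Yv) = 0 by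
            rw [map_add, hLw, hLXY]; ring]
          ring
        rw [this]
        exact Ideal.mul_mem_left _ _ (Ideal.subset_span (Set.mem_singleton _))
      rw [hstep]
      exact sub_mem hLmem (Ideal.mul_mem_left _ _ ih)
  obtain ⟨m, rfl⟩ : ∃ m, N = m + 1 := ⟨N - 1, by omega⟩
  simp only [Nat.add_sub_cancel, Nat.cast_add, Nat.cast_one]
  exact key m
end
end
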